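/- Let E ⊆ C([n],2) with the property that for every i ∈ [n], |{j ≠ i : {i,j} ∉ E}| ≤ K, where 4K ≤ n. Let M ≤ n/4 and let 𝓜 be a uniformly random matching of size M on [n]. Then the probability that no edge of 𝓜 belongs to E is at most (4K/n)^M. -/

import Mathlib

open Finset

namespace Stmt19Aux

variable {n : ℕ}

/-- matching predicate -/
def MP (m : ℕ) (ℳ : Finset (Finset (Fin n))) : Prop :=
  ℳ.card = m ∧ (∀ e ∈ ℳ, e.card = 2) ∧ ∀ e ∈ ℳ, ∀ f ∈ ℳ, e ≠ f → Disjoint e f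

instance (m : ℕ) : DecidablePred (MP (n := n) m) := fun ℳ => by
  unfold MP; infer_instance

lemma free_card {m : ℕ} {N : Finset (Finset (Fin n))} (hN : MP m N) :
    (univ \ N.biUnion id).card = n - 2 * m := by
  obtain ⟨hcard, h2, hdisj⟩ := hN
  rw [card_sdiff_of_subset (subset_univ _), card_univ, Fintype.card_fin,
    card_biUnion (t := id) (fun e he f hf hef => hdisj e he f hf hef)]
  have : ∑ e ∈ N, (id e).card = ∑ _e ∈ N, 2 :=
    Finset.sum_congr rfl (fun e he => h2 e he)
  rw [this, Finset.sum_const, smul_eq_mul, hcard, mul_comm]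

lemma ext_eq {m : ℕ} {N : Finset (Finset (Fin n))} (_hN : MP m N) :
    (univ.filter fun e : Finset (Fin n) => e.card = 2 ∧ ∀ f ∈ N, Disjoint e f)
      = (univ \ N.biUnion id).powersetCard 2 := by
  ext e
  simp only [mem_filter, mem_univ, true_and, mem_powersetCard]
  constructor
  · rintro ⟨h2, hd⟩
    refine ⟨?_, h2⟩
    rw [subset_sdiff, disjoint_biUnion_right]
    exact ⟨subset_univ _, fun f hf => hd f hf⟩
  · rintro ⟨hsub, h2⟩
    rw [subset_sdiff, disjoint_biUnion_right] at hsub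
    exact ⟨h2, fun f hf => hsub.2 f hf⟩

lemma ext_card {m : ℕ} {N : Finset (Finset (Fin n))} (hN : MP m N) :
    (univ.filter fun e : Finset (Fin n) => e.card = 2 ∧ ∀ f ∈ N, Disjoint e f).card
      = (n - 2 * m).choose 2 := by
  rw [ext_eq hN, card_powersetCard, free_card hN]

lemma extB_le {m K : ℕ} {E : Finset (Finset (Fin n))}
    (hK : ∀ i : Fin n,
      ((univ.filter fun j => j ≠ i ∧ ({i, j} : Finset (Fin n)) ∉ E).card) ≤ K)
    {N : Finset (Finset (Fin n))} (hN : MP m N) :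
    (univ.filter fun e : Finset (Fin n) =>
        (e.card = 2 ∧ ∀ f ∈ N, Disjoint e f) ∧ e ∉ E).card ≤ (n - 2 * m) * K := by
  classical
  set F := univ \ N.biUnion id with hF
  set s := univ.filter fun e : Finset (Fin n) =>
      (e.card = 2 ∧ ∀ f ∈ N, Disjoint e f) ∧ e ∉ E with hs
  have hmem : ∀ e ∈ s, e.card = 2 ∧ e ⊆ F ∧ e ∉ E := by
    intro e he
    rw [hs, mem_filter] at he
    obtain ⟨-, ⟨h2, hd⟩, hE⟩ := he
    refine ⟨h2, ?_, hE⟩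
    rw [hF, subset_sdiff]
    exact ⟨subset_univ _, by rw [disjoint_biUnion_right]; exact fun f hf => hd f hf⟩
  have keymm : ∀ e ∈ s, ∃ h : e.Nonempty, e = {e.min' h, e.max' h} := by
    intro e he
    obtain ⟨h2, -, -⟩ := hmem e he
    have hne : e.Nonempty := card_pos.1 (by omega)
    have hlt := Finset.min'_lt_max'_of_card e (by omega : 1 < e.card)
    have hsub : ({e.min' hne, e.max' hne} : Finset (Fin n)) ⊆ e := by
      intro x hx
      simp only [mem_insert, mem_singleton] at hx
      rcases hx with rfl | rfl
      · exact min'_mem _ _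
      · exact max'_mem _ _
    have hc : ({e.min' hne, e.max' hne} : Finset (Fin n)).card = 2 :=
      card_pair hlt.ne
    exact ⟨hne, (Finset.eq_of_subset_of_card_le hsub (by omega)).symm⟩
  have hsub2 : s ⊆ F.biUnion fun i =>
      (univ.filter fun j => j ≠ i ∧ ({i, j} : Finset (Fin n)) ∉ E).image
        fun j => ({i, j} : Finset (Fin n)) := by
    intro e he
    obtain ⟨hne, heq⟩ := keymm e he
    obtain ⟨h2, hsubF, hE⟩ := hmem e he
    have hmm : e.min' hne ≠ e.max' hne :=
      (Finset.min'_lt_max'_of_card e (by omega : 1 < e.card)).ne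
    rw [mem_biUnion]
    refine ⟨e.min' hne, hsubF (min'_mem _ _), ?_⟩
    rw [mem_image]
    refine ⟨e.max' hne, ?_, heq.symm⟩
    rw [mem_filter]
    exact ⟨mem_univ _, hmm.symm, by rw [← heq]; exact hE⟩
  calc s.card ≤ _ := Finset.card_le_card hsub2
    _ ≤ ∑ i ∈ F, ((univ.filter fun j => j ≠ i ∧ ({i, j} : Finset (Fin n)) ∉ E).image
          fun j => ({i, j} : Finset (Fin n))).card := Finset.card_biUnion_le
    _ ≤ ∑ _i ∈ F, K :=
        Finset.sum_le_sum fun i _ => Finset.card_image_le.trans (hK i)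
    _ = F.card * K := by rw [Finset.sum_const, smul_eq_mul]
    _ = (n - 2 * m) * K := by rw [hF, free_card hN]

lemma key (P : Finset (Fin n) → Prop) [DecidablePred P] (m : ℕ) :
    ((univ.filter fun ℳ : Finset (Finset (Fin n)) =>
        MP (m + 1) ℳ ∧ ∀ e ∈ ℳ, P e).sigma fun ℳ => ℳ).card
    = ((univ.filter fun N : Finset (Finset (Fin n)) =>
        MP m N ∧ ∀ e ∈ N, P e).sigma fun N =>
        univ.filter fun e : Finset (Fin n) =>
          (e.card = 2 ∧ ∀ f ∈ N, Disjoint e f) ∧ P e).card := by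
  classical
  apply Finset.card_bij
    (fun p _ => (⟨p.1.erase p.2, p.2⟩ : (_ : Finset (Finset (Fin n))) × Finset (Fin n)))
  · -- maps into target
    rintro ⟨ℳ, e⟩ hp
    rw [mem_sigma, mem_filter] at hp
    obtain ⟨⟨-, ⟨hcard, h2, hdisj⟩, hP⟩, he⟩ := hp
    rw [mem_sigma, mem_filter, mem_filter]
    refine ⟨⟨mem_univ _, ⟨?_, ?_, ?_⟩, ?_⟩, mem_univ _, ⟨h2 e he, ?_⟩, hP e he⟩
    · simp [card_erase_of_mem he, hcard]
    · exact fun f hf => h2 f (mem_of_mem_erase hf)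
    · exact fun f hf g hg => hdisj f (mem_of_mem_erase hf) g (mem_of_mem_erase hg)
    · exact fun f hf => hP f (mem_of_mem_erase hf)
    · intro f hf
      rw [mem_erase] at hf
      exact hdisj e he f hf.2 (Ne.symm hf.1)
  · -- injective
    rintro ⟨ℳ, e⟩ hp ⟨ℳ', e'⟩ hp' heq
    rw [mem_sigma] at hp hp'
    dsimp only at hp hp' heq
    have h2 : e = e' := congrArg (fun p : (_ : Finset (Finset (Fin n))) × Finset (Fin n) => p.2) heq
    have h1 : ℳ.erase e = ℳ'.erase e' :=
      congrArg (fun p : (_ : Finset (Finset (Fin n))) × Finset (Fin n) => p.1) heq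
    subst h2
    have : ℳ = ℳ' := by
      rw [← insert_erase hp.2, ← insert_erase hp'.2, h1]
    simp [this]
  · -- surjective
    rintro ⟨N, e⟩ hq
    rw [mem_sigma, mem_filter, mem_filter] at hq
    dsimp only at hq
    obtain ⟨⟨-, ⟨hcard, h2, hdisj⟩, hP⟩, -, ⟨he2, hed⟩, heP⟩ := hq
    have heN : e ∉ N := by
      intro h
      have := hed e h
      rw [disjoint_self] at this
      simp [this] at he2
    refine ⟨⟨insert e N, e⟩, ?_, ?_⟩
    · rw [mem_sigma, mem_filter]
      dsimp only
      refine ⟨⟨mem_univ _, ⟨?_, ?_, ?_⟩, ?_⟩, mem_insert_self _ _⟩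
      · rw [card_insert_of_notMem heN, hcard]
      · intro f hf
        rcases mem_insert.1 hf with rfl | hf
        · exact he2
        · exact h2 f hf
      · intro f hf g hg hfg
        rcases mem_insert.1 hf with rfl | hf'
        · rcases mem_insert.1 hg with rfl | hg'
          · exact absurd rfl hfg
          · exact hed g hg'
        · rcases mem_insert.1 hg with rfl | hg'
          · exact (hed f hf').symm
          · exact hdisj f hf' g hg' hfg
      · intro f hf
        rcases mem_insert.1 hf with rfl | hf
        · exact heP
        · exact hP f hf
    · simp [erase_insert heN]

lemma step_g (m : ℕ) :
    (m + 1) * (univ.filter fun ℳ : Finset (Finset (Fin n)) => MP (m + 1) ℳ).card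
      = (univ.filter fun N : Finset (Finset (Fin n)) => MP m N).card
          * ((n - 2 * m).choose 2) := by
  classical
  have h := key (n := n) (fun _ => True) m
  have hfix : ∀ k : ℕ,
      (univ.filter fun ℳ : Finset (Finset (Fin n)) => MP k ℳ ∧ ∀ e ∈ ℳ, True)
        = univ.filter fun ℳ : Finset (Finset (Fin n)) => MP k ℳ :=
    fun k => filter_congr (by simp)
  rw [card_sigma, card_sigma, hfix, hfix] at h
  have hl : ∑ ℳ ∈ (univ.filter fun ℳ : Finset (Finset (Fin n)) => MP (m + 1) ℳ), ℳ.card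
      = (univ.filter fun ℳ : Finset (Finset (Fin n)) => MP (m + 1) ℳ).card * (m + 1) := by
    rw [Finset.sum_congr rfl (fun ℳ hℳ => ((mem_filter.1 hℳ).2).1), Finset.sum_const,
      smul_eq_mul]
  have hr : ∀ N ∈ (univ.filter fun N : Finset (Finset (Fin n)) => MP m N),
      (univ.filter fun e : Finset (Fin n) =>
          (e.card = 2 ∧ ∀ f ∈ N, Disjoint e f) ∧ True).card = (n - 2 * m).choose 2 := by
    intro N hN
    have heq : (univ.filter fun e : Finset (Fin n) =>
        (e.card = 2 ∧ ∀ f ∈ N, Disjoint e f) ∧ True)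
        = univ.filter fun e : Finset (Fin n) => e.card = 2 ∧ ∀ f ∈ N, Disjoint e f :=
      filter_congr (by simp)
    rw [heq, ext_card (mem_filter.1 hN).2]
  rw [hl, Finset.sum_congr rfl hr, Finset.sum_const, smul_eq_mul] at h
  rw [mul_comm]
  exact h

lemma step_f {K : ℕ} {E : Finset (Finset (Fin n))}
    (hK : ∀ i : Fin n,
      ((univ.filter fun j => j ≠ i ∧ ({i, j} : Finset (Fin n)) ∉ E).card) ≤ K)
    (m : ℕ) :
    (m + 1) * (univ.filter fun ℳ : Finset (Finset (Fin n)) =>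
        MP (m + 1) ℳ ∧ ∀ e ∈ ℳ, e ∉ E).card
      ≤ (univ.filter fun N : Finset (Finset (Fin n)) => MP m N ∧ ∀ e ∈ N, e ∉ E).card
          * ((n - 2 * m) * K) := by
  classical
  have h := key (n := n) (fun e => e ∉ E) m
  rw [card_sigma, card_sigma] at h
  have hl : ∑ ℳ ∈ (univ.filter fun ℳ : Finset (Finset (Fin n)) =>
        MP (m + 1) ℳ ∧ ∀ e ∈ ℳ, e ∉ E), ℳ.card
      = (univ.filter fun ℳ : Finset (Finset (Fin n)) =>
          MP (m + 1) ℳ ∧ ∀ e ∈ ℳ, e ∉ E).card * (m + 1) := by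
    rw [Finset.sum_congr rfl (fun ℳ hℳ => ((mem_filter.1 hℳ).2).1.1), Finset.sum_const,
      smul_eq_mul]
  rw [hl] at h
  have hr : ∑ N ∈ (univ.filter fun N : Finset (Finset (Fin n)) =>
        MP m N ∧ ∀ e ∈ N, e ∉ E),
      (univ.filter fun e : Finset (Fin n) =>
          (e.card = 2 ∧ ∀ f ∈ N, Disjoint e f) ∧ e ∉ E).card
      ≤ (univ.filter fun N : Finset (Finset (Fin n)) =>
          MP m N ∧ ∀ e ∈ N, e ∉ E).card * ((n - 2 * m) * K) := by
    calc _ ≤ ∑ _N ∈ (univ.filter fun N : Finset (Finset (Fin n)) =>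
          MP m N ∧ ∀ e ∈ N, e ∉ E), (n - 2 * m) * K :=
        Finset.sum_le_sum fun N hN => extB_le hK ((mem_filter.1 hN).2).1
      _ = _ := by rw [Finset.sum_const, smul_eq_mul]
  rw [mul_comm, h]
  exact hr

lemma two_mul_choose_two (r : ℕ) : 2 * r.choose 2 = r * (r - 1) := by
  induction r with
  | zero => simp
  | succ s ih =>
    rw [Nat.choose_succ_succ, Nat.choose_one_right, Nat.mul_add, ih]
    cases s with
    | zero => simp
    | succ t =>
      simp only [Nat.succ_sub_one]
      ring

end Stmt19Aux

set_option maxHeartbeats 1000000 in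
open Stmt19Aux in
/-- If every vertex `i ∈ [n]` has at most `K` partners `j` with `{i,j} ∉ E`,
where `4K ≤ n` and `M ≤ n/4`, then a uniformly random matching of size `M` on
`[n]` avoids `E` entirely with probability at most `(4K/n)^M`. -/
theorem stmt19 (n M K : ℕ) (E : Finset (Finset (Fin n)))
    (hK : ∀ i : Fin n,
      ((univ.filter fun j => j ≠ i ∧ ({i, j} : Finset (Fin n)) ∉ E).card) ≤ K)
    (h4K : 4 * K ≤ n) (hM : 4 * M ≤ n) :
    ((univ.filter (fun ℳ : Finset (Finset (Fin n)) =>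
        (ℳ.card = M ∧ (∀ e ∈ ℳ, e.card = 2) ∧
          ∀ e ∈ ℳ, ∀ f ∈ ℳ, e ≠ f → Disjoint e f) ∧
        ∀ e ∈ ℳ, e ∉ E)).card : ℝ) /
      ((univ.filter (fun ℳ : Finset (Finset (Fin n)) =>
        ℳ.card = M ∧ (∀ e ∈ ℳ, e.card = 2) ∧
          ∀ e ∈ ℳ, ∀ f ∈ ℳ, e ≠ f → Disjoint e f)).card : ℝ) ≤
      ((4 * K : ℝ) / n) ^ M := by
  classical
  have hq0 : (0:ℝ) ≤ (4 * K : ℝ) / n := by positivity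
  have hfg : ∀ m : ℕ,
      (univ.filter fun ℳ : Finset (Finset (Fin n)) => MP m ℳ ∧ ∀ e ∈ ℳ, e ∉ E).card
        ≤ (univ.filter fun ℳ : Finset (Finset (Fin n)) => MP m ℳ).card := by
    intro m
    apply Finset.card_le_card
    intro ℳ h
    rw [mem_filter] at h ⊢
    exact ⟨h.1, h.2.1⟩
  have main : ∀ m : ℕ, m ≤ M →
      ((univ.filter fun ℳ : Finset (Finset (Fin n)) =>
          MP m ℳ ∧ ∀ e ∈ ℳ, e ∉ E).card : ℝ)
        ≤ ((4 * K : ℝ) / n) ^ m *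
          (univ.filter fun ℳ : Finset (Finset (Fin n)) => MP m ℳ).card := by
    intro m
    induction m with
    | zero =>
      intro _
      simpa using (Nat.cast_le (α := ℝ)).2 (hfg 0)
    | succ m ih =>
      intro hm1
      have ihm := ih (by omega)
      have hn4 : 4 * (m + 1) ≤ n := le_trans (by omega) hM
      have hnpos : (0 : ℝ) < n := by
        have h0n : 0 < n := by omega
        exact_mod_cast h0n
      have hsf := step_f (n := n) hK m
      have hsg := step_g (n := n) m
      obtain ⟨a, ha⟩ : ∃ x, (univ.filter fun ℳ : Finset (Finset (Fin n)) =>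
          MP (m + 1) ℳ ∧ ∀ e ∈ ℳ, e ∉ E).card = x := ⟨_, rfl⟩
      obtain ⟨b, hb⟩ : ∃ x, (univ.filter fun ℳ : Finset (Finset (Fin n)) =>
          MP m ℳ ∧ ∀ e ∈ ℳ, e ∉ E).card = x := ⟨_, rfl⟩
      obtain ⟨c, hc⟩ : ∃ x, (univ.filter fun ℳ : Finset (Finset (Fin n)) =>
          MP m ℳ).card = x := ⟨_, rfl⟩
      obtain ⟨d, hd⟩ : ∃ x, (univ.filter fun ℳ : Finset (Finset (Fin n)) =>
          MP (m + 1) ℳ).card = x := ⟨_, rfl⟩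
      rw [ha, hd]
      rw [hb, hc] at ihm
      rw [ha, hb] at hsf
      rw [hc, hd] at hsg
      set r : ℕ := n - 2 * m with hrdef
      set C : ℕ := r.choose 2 with hC
      -- now everything is small
      set q : ℝ := (4 * K : ℝ) / n with hqdef
      have hq0' : (0 : ℝ) ≤ q := by rw [hqdef]; positivity
      have h1 : ((m : ℝ) + 1) * a ≤ (b : ℝ) * (r * K) := by exact_mod_cast hsf
      have h2 : ((m : ℝ) + 1) * d = (c : ℝ) * C := by exact_mod_cast hsg
      have hcomp : ((r : ℝ) * K) ≤ q * C := by
        have hnat : 2 * (r * K * n) ≤ 4 * K * (2 * C) := by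
          rw [hC, two_mul_choose_two]
          have hle : n ≤ 2 * (r - 1) := by omega
          calc 2 * (r * K * n) = (r * K) * (2 * n) := by ring
            _ ≤ (r * K) * (2 * (2 * (r - 1))) := by
                apply Nat.mul_le_mul_left
                omega
            _ = 4 * K * (r * (r - 1)) := by ring
        have hcast : (2 : ℝ) * ((r : ℝ) * K * n) ≤ 4 * K * (2 * (C : ℝ)) := by
          exact_mod_cast hnat
        rw [hqdef, div_mul_eq_mul_div, le_div_iff₀ hnpos]
        nlinarith [hcast]
      have hstep : ((m : ℝ) + 1) * a ≤ ((m : ℝ) + 1) * (q ^ (m + 1) * d) := by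
        calc ((m : ℝ) + 1) * a ≤ (b : ℝ) * (r * K) := h1
          _ ≤ (q ^ m * c) * ((r : ℝ) * K) := by
              apply mul_le_mul_of_nonneg_right ihm (by positivity)
          _ ≤ (q ^ m * c) * (q * C) := by
              apply mul_le_mul_of_nonneg_left hcomp (by positivity)
          _ = q ^ (m + 1) * ((c : ℝ) * C) := by ring
          _ = q ^ (m + 1) * (((m : ℝ) + 1) * d) := by rw [h2]
          _ = ((m : ℝ) + 1) * (q ^ (m + 1) * d) := by ring
      have hmpos : (0 : ℝ) < (m : ℝ) + 1 := by positivity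
      exact le_of_mul_le_mul_left hstep hmpos
  have hAf : (univ.filter (fun ℳ : Finset (Finset (Fin n)) =>
        (ℳ.card = M ∧ (∀ e ∈ ℳ, e.card = 2) ∧
          ∀ e ∈ ℳ, ∀ f ∈ ℳ, e ≠ f → Disjoint e f) ∧
        ∀ e ∈ ℳ, e ∉ E))
      = univ.filter fun ℳ : Finset (Finset (Fin n)) => MP M ℳ ∧ ∀ e ∈ ℳ, e ∉ E :=
    filter_congr fun _ _ => Iff.rfl
  have hAg : (univ.filter (fun ℳ : Finset (Finset (Fin n)) =>
        ℳ.card = M ∧ (∀ e ∈ ℳ, e.card = 2) ∧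
          ∀ e ∈ ℳ, ∀ f ∈ ℳ, e ≠ f → Disjoint e f))
      = univ.filter fun ℳ : Finset (Finset (Fin n)) => MP M ℳ :=
    filter_congr fun _ _ => Iff.rfl
  rw [hAf, hAg]
  have hmain := main M le_rfl
  rcases Nat.eq_zero_or_pos
      (univ.filter fun ℳ : Finset (Finset (Fin n)) => MP M ℳ).card with h0 | hpos
  · have hf0 : (univ.filter fun ℳ : Finset (Finset (Fin n)) =>
        MP M ℳ ∧ ∀ e ∈ ℳ, e ∉ E).card = 0 := by
      have := hfg M
      omega
    rw [hf0, h0]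
    simp
    positivity
  · rw [div_le_iff₀ (by exact_mod_cast hpos)]
    exact hmain
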